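/- Let ρ ≥ 0, let p ∈ [1, ∞] and let q be its conjugate exponent (1/p + 1/q = 1), and let U = {δ ∈ ℝ^M : ‖δ‖_p ≤ ρ}. Then for every x ∈ ℝ^M, sup_{δ ∈ U} c_kᵀ z²(x + δ) = sup_{s ∈ [0,1]^r} inf_{t ∈ [0,1]^r} ( ρ ‖(p̂ − q̂)ᵀ W¹‖_q + (p̂ − q̂)ᵀ (W¹x + b¹) + c_kᵀ b² ), where p̂ = [(W²)ᵀ c_k]⁺ ⊙ s and q̂ = [−(W²)ᵀ c_k]⁺ ⊙ t, and ‖v‖_q denotes the ℓ^q norm of the vector v ∈ ℝ^M. -/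

import Mathlib

open scoped ENNReal NNReal
open Set Finset


lemma one_dim_minimax {E : Type*} [AddCommGroup E] [Module ℝ E]
    (X : Set E) (f g : E → ℝ) (V : ℝ)
    (hX : ∀ a ∈ X, ∀ b ∈ X, ∀ l m : ℝ, 0 ≤ l → 0 ≤ m → l + m = 1 → l • a + m • b ∈ X)
    (hf : ∀ a ∈ X, ∀ b ∈ X, ∀ l m : ℝ, 0 ≤ l → 0 ≤ m → l + m = 1 →
      l * f a + m * f b ≤ f (l • a + m • b))
    (hg : ∀ a ∈ X, ∀ b ∈ X, ∀ l m : ℝ, 0 ≤ l → 0 ≤ m → l + m = 1 →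
      g (l • a + m • b) = l * g a + m * g b)
    (hV : ∀ δ ∈ X, f δ + min 0 (g δ) ≤ V) :
    ∃ t ∈ Icc (0:ℝ) 1, ∀ δ ∈ X, f δ + t * g δ ≤ V := by
  by_contra hcon
  push_neg at hcon
  -- two open sets
  set UA : Set ℝ := ⋃ δ ∈ {δ ∈ X | 0 < g δ}, {t : ℝ | V < f δ + t * g δ} with hUA
  set UB : Set ℝ := ⋃ δ ∈ {δ ∈ X | g δ < 0}, {t : ℝ | V < f δ + t * g δ} with hUB
  have hoA : IsOpen UA := by
    refine isOpen_biUnion fun δ _ => ?_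
    exact isOpen_lt continuous_const (by fun_prop)
  have hoB : IsOpen UB := by
    refine isOpen_biUnion fun δ _ => ?_
    exact isOpen_lt continuous_const (by fun_prop)
  have hcover : Icc (0:ℝ) 1 ⊆ UA ∪ UB := by
    intro t ht
    obtain ⟨δ, hδX, hδ⟩ := hcon t ht
    rcases lt_trichotomy (g δ) 0 with h | h | h
    · exact Or.inr (mem_biUnion ⟨hδX, h⟩ hδ)
    · exfalso
      have := hV δ hδX
      rw [h] at hδ this
      simp at this
      linarith
    · exact Or.inl (mem_biUnion ⟨hδX, h⟩ hδ)
  have hA1 : (1:ℝ) ∈ Icc (0:ℝ) 1 ∩ UA := by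
    obtain ⟨δ, hδX, hδ⟩ := hcon 1 (by norm_num)
    refine ⟨by norm_num, ?_⟩
    have hgpos : 0 < g δ := by
      by_contra hle
      push_neg at hle
      have := hV δ hδX
      rw [min_eq_right hle] at this
      linarith
    exact mem_biUnion ⟨hδX, hgpos⟩ hδ
  have hB0 : (0:ℝ) ∈ Icc (0:ℝ) 1 ∩ UB := by
    obtain ⟨δ, hδX, hδ⟩ := hcon 0 (by norm_num)
    refine ⟨by norm_num, ?_⟩
    have hgneg : g δ < 0 := by
      by_contra hle
      push_neg at hle
      have := hV δ hδX
      rw [min_eq_left hle] at this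
      linarith
    exact mem_biUnion ⟨hδX, hgneg⟩ hδ
  obtain ⟨t, ht, htA, htB⟩ : ∃ t, t ∈ Icc (0:ℝ) 1 ∧ t ∈ UA ∧ t ∈ UB := by
    obtain ⟨t, ht⟩ := isPreconnected_Icc (a := (0:ℝ)) (b := 1) UA UB hoA hoB hcover
      ⟨1, hA1⟩ ⟨0, hB0⟩
    exact ⟨t, ht.1, ht.2.1, ht.2.2⟩
  obtain ⟨δa, ⟨haX, hga⟩, hta⟩ := mem_iUnion₂.1 htA
  obtain ⟨δb, ⟨hbX, hgb⟩, htb⟩ := mem_iUnion₂.1 htB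
  simp only [mem_setOf_eq] at hta htb
  set D := g δa - g δb with hD
  have hDpos : 0 < D := by linarith
  set l := (-(g δb)) / D with hl
  set m := (g δa) / D with hm
  have hl0 : 0 ≤ l := div_nonneg (by linarith) hDpos.le
  have hm0 : 0 ≤ m := div_nonneg (by linarith) hDpos.le
  have hlm : l + m = 1 := by rw [hl, hm, ← add_div, hD, div_eq_one_iff_eq hDpos.ne']; ring
  have hmem := hX δa haX δb hbX l m hl0 hm0 hlm
  have hgc : g (l • δa + m • δb) = 0 := by
    rw [hg δa haX δb hbX l m hl0 hm0 hlm, hl, hm]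
    field_simp
    ring
  have hfc := hf δa haX δb hbX l m hl0 hm0 hlm
  have hVc := hV _ hmem
  rw [hgc] at hVc
  simp only [min_self, add_zero] at hVc
  have hlg : l * g δa + m * g δb = 0 := by
    rw [← hg δa haX δb hbX l m hl0 hm0 hlm, hgc]
  have e1 : l * (f δa + t * g δa) = l * f δa + t * (l * g δa) := by ring
  have e2 : m * (f δb + t * g δb) = m * f δb + t * (m * g δb) := by ring
  have e3 : l * V + m * V = V := by rw [← add_mul, hlm, one_mul]
  have ht1 : t * (l * g δa) + t * (m * g δb) = 0 := by
    have : t * (l * g δa) + t * (m * g δb) = t * (l * g δa + m * g δb) := by ring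
    rw [this, hlg, mul_zero]
  have hpos : 0 < l ∨ 0 < m := by
    rcases hl0.lt_or_eq with h | h
    · exact Or.inl h
    · right; rw [← h] at hlm; linarith
  rcases hpos with hp | hp
  · have lt1 := mul_lt_mul_of_pos_left hta hp
    have le2 := mul_le_mul_of_nonneg_left htb.le hm0
    linarith
  · have lt1 := mul_lt_mul_of_pos_left htb hp
    have le2 := mul_le_mul_of_nonneg_left hta.le hl0
    linarith


lemma multi_minimax {E : Type*} [AddCommGroup E] [Module ℝ E] {ι : Type*} [DecidableEq ι]
    (X : Set E) (g : ι → E → ℝ)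
    (hX : ∀ a ∈ X, ∀ b ∈ X, ∀ l m : ℝ, 0 ≤ l → 0 ≤ m → l + m = 1 → l • a + m • b ∈ X)
    (hg : ∀ j, ∀ a ∈ X, ∀ b ∈ X, ∀ l m : ℝ, 0 ≤ l → 0 ≤ m → l + m = 1 →
      g j (l • a + m • b) = l * g j a + m * g j b)
    (J : Finset ι) :
    ∀ (f : E → ℝ) (V : ℝ),
      (∀ a ∈ X, ∀ b ∈ X, ∀ l m : ℝ, 0 ≤ l → 0 ≤ m → l + m = 1 →
        l * f a + m * f b ≤ f (l • a + m • b)) →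
      (∀ δ ∈ X, f δ + ∑ j ∈ J, min 0 (g j δ) ≤ V) →
      ∃ t : ι → ℝ, (∀ j, t j ∈ Icc (0:ℝ) 1) ∧ ∀ δ ∈ X, f δ + ∑ j ∈ J, t j * g j δ ≤ V := by
  induction J using Finset.induction with
  | empty =>
    intro f V _ hV
    exact ⟨fun _ => 0, fun _ => by norm_num, fun δ hδ => by simpa using hV δ hδ⟩
  | @insert j₀ J hj₀ ih =>
    intro f V hf hV
    -- apply IH to f + min 0 (g j₀ ·)
    have hf' : ∀ a ∈ X, ∀ b ∈ X, ∀ l m : ℝ, 0 ≤ l → 0 ≤ m → l + m = 1 →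
        l * (f a + min 0 (g j₀ a)) + m * (f b + min 0 (g j₀ b)) ≤
          f (l • a + m • b) + min 0 (g j₀ (l • a + m • b)) := by
      intro a ha b hb l m hl hm hlm
      have h1 := hf a ha b hb l m hl hm hlm
      have h2 : l * min 0 (g j₀ a) + m * min 0 (g j₀ b) ≤ min 0 (g j₀ (l • a + m • b)) := by
        rw [hg j₀ a ha b hb l m hl hm hlm]
        have ha1 : l * min 0 (g j₀ a) ≤ l * g j₀ a :=
          mul_le_mul_of_nonneg_left (min_le_right _ _) hl
        have hb1 : m * min 0 (g j₀ b) ≤ m * g j₀ b :=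
          mul_le_mul_of_nonneg_left (min_le_right _ _) hm
        have ha2 : l * min 0 (g j₀ a) ≤ 0 :=
          mul_nonpos_of_nonneg_of_nonpos hl (min_le_left _ _)
        have hb2 : m * min 0 (g j₀ b) ≤ 0 :=
          mul_nonpos_of_nonneg_of_nonpos hm (min_le_left _ _)
        exact le_min (by linarith) (by linarith)
      linarith
    have hV' : ∀ δ ∈ X, (f δ + min 0 (g j₀ δ)) + ∑ j ∈ J, min 0 (g j δ) ≤ V := by
      intro δ hδ
      have := hV δ hδ
      rw [Finset.sum_insert hj₀] at this
      linarith
    obtain ⟨t', ht', htV'⟩ := ih (fun δ => f δ + min 0 (g j₀ δ)) V hf' hV'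
    -- now 1-d lemma with f₁ := f + ∑_J t' j * g j and g₁ := g j₀
    obtain ⟨t₀, ht₀, ht₀V⟩ := one_dim_minimax X (fun δ => f δ + ∑ j ∈ J, t' j * g j δ) (g j₀) V hX
      (by
        intro a ha b hb l m hl hm hlm
        have h1 := hf a ha b hb l m hl hm hlm
        have h2 : ∑ j ∈ J, t' j * g j (l • a + m • b) =
            l * ∑ j ∈ J, t' j * g j a + m * ∑ j ∈ J, t' j * g j b := by
          rw [Finset.mul_sum, Finset.mul_sum, ← Finset.sum_add_distrib]
          refine Finset.sum_congr rfl fun j _ => ?_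
          rw [hg j a ha b hb l m hl hm hlm]; ring
        rw [h2]; linarith
      )
      (fun a ha b hb l m hl hm hlm => hg j₀ a ha b hb l m hl hm hlm)
      (by
        intro δ hδ
        have := htV' δ hδ
        linarith
      )
    refine ⟨Function.update t' j₀ t₀, ?_, ?_⟩
    · intro j
      rcases eq_or_ne j j₀ with rfl | h
      · simpa using ht₀
      · simpa [Function.update_of_ne h] using ht' j
    · intro δ hδ
      rw [Finset.sum_insert hj₀, Function.update_self]
      have hsum : ∑ j ∈ J, Function.update t' j₀ t₀ j * g j δ = ∑ j ∈ J, t' j * g j δ :=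
        Finset.sum_congr rfl fun j hj =>
          by rw [Function.update_of_ne (by rintro rfl; exact hj₀ hj)]
      rw [hsum]
      have := ht₀V δ hδ
      linarith


lemma conj_cases (p q : ℝ≥0∞) (hpq : 1/p + 1/q = 1) :
    (p = 1 ∧ q = ⊤) ∨ (p = ⊤ ∧ q = 1) ∨
      (p ≠ ⊤ ∧ q ≠ ⊤ ∧ p.toReal.HolderConjugate q.toReal) := by
  rw [one_div, one_div] at hpq
  have hc : p.HolderConjugate q := ENNReal.holderConjugate_iff.2 hpq
  rcases eq_or_ne p 1 with rfl | hp1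
  · left
    refine ⟨rfl, ?_⟩
    have : q⁻¹ = 0 := by
      have h1 : (1:ℝ≥0∞)⁻¹ + q⁻¹ = 1⁻¹ + 0 := by simpa using hpq
      exact (ENNReal.add_right_inj (by simp)).1 h1
    simpa [ENNReal.inv_eq_zero] using this
  rcases eq_or_ne p ⊤ with rfl | hptop
  · right; left
    refine ⟨rfl, ?_⟩
    have : q⁻¹ = 1 := by simpa using hpq
    rw [← inv_inv q, this, inv_one]
  · right; right
    have hp0 : p ≠ 0 := ENNReal.HolderConjugate.ne_zero p q
    have hqtop : q ≠ ⊤ := by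
      rintro rfl
      simp only [ENNReal.inv_top, add_zero] at hpq
      exact hp1 (by simpa using congrArg Inv.inv hpq)
    have hq0 : q ≠ 0 := ENNReal.HolderConjugate.ne_zero q p
    refine ⟨hptop, hqtop, Real.holderConjugate_iff.2 ⟨?_, ?_⟩⟩
    · have h1p : 1 < p := lt_of_le_of_ne (ENNReal.HolderConjugate.one_le p q) (Ne.symm hp1)
      have := (ENNReal.toReal_lt_toReal (by simp) hptop).2 h1p
      simpa using this
    · have h1 : (p⁻¹ + q⁻¹).toReal = 1 := by rw [hpq]; simp
      rwa [ENNReal.toReal_add (by simp [hp0]) (by simp [hq0]), ENNReal.toReal_inv,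
        ENNReal.toReal_inv] at h1

lemma norm_Lp_one {M : ℕ} (δ : Fin M → ℝ) :
    ‖(WithLp.equiv (1:ℝ≥0∞) (Fin M → ℝ)).symm δ‖ = ∑ i, |δ i| := by
  rw [PiLp.norm_eq_sum (by norm_num)]
  simp [Real.norm_eq_abs]

lemma abs_le_pi_norm {M : ℕ} (w : Fin M → ℝ) (i : Fin M) : |w i| ≤ ‖w‖ := by
  simpa [Real.norm_eq_abs] using norm_le_pi_norm w i

lemma holder_sum {M : ℕ} (p q : ℝ≥0∞) [Fact (1 ≤ p)] [Fact (1 ≤ q)]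
    (hpq : 1/p + 1/q = 1) (w δ : Fin M → ℝ) :
    ∑ i, w i * δ i ≤
      ‖(WithLp.equiv q (Fin M → ℝ)).symm w‖ * ‖(WithLp.equiv p (Fin M → ℝ)).symm δ‖ := by
  have habs : ∑ i, w i * δ i ≤ ∑ i, |w i| * |δ i| :=
    Finset.sum_le_sum fun i _ => by rw [← abs_mul]; exact le_abs_self _
  rcases conj_cases p q hpq with ⟨rfl, rfl⟩ | ⟨rfl, rfl⟩ | ⟨hpt, hqt, hrc⟩
  · rw [norm_Lp_one, WithLp.equiv_symm_apply, PiLp.norm_toLp, Finset.mul_sum]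
    refine habs.trans (Finset.sum_le_sum fun i _ => ?_)
    exact mul_le_mul_of_nonneg_right (abs_le_pi_norm w i) (abs_nonneg _)
  · rw [norm_Lp_one, WithLp.equiv_symm_apply, PiLp.norm_toLp, Finset.sum_mul]
    refine habs.trans (Finset.sum_le_sum fun i _ => ?_)
    exact mul_le_mul_of_nonneg_left (abs_le_pi_norm δ i) (abs_nonneg _)
  · have hp0 : p ≠ 0 := (zero_lt_one.trans_le (Fact.out : 1 ≤ p)).ne'
    have hq0 : q ≠ 0 := (zero_lt_one.trans_le (Fact.out : 1 ≤ q)).ne'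
    rw [PiLp.norm_eq_sum (ENNReal.toReal_pos hq0 hqt),
      PiLp.norm_eq_sum (ENNReal.toReal_pos hp0 hpt)]
    simp only [WithLp.equiv_symm_apply, PiLp.toLp_apply, Real.norm_eq_abs]
    exact Real.inner_le_Lp_mul_Lq Finset.univ w δ hrc.symm

lemma holder_attain {M : ℕ} (p q : ℝ≥0∞) [Fact (1 ≤ p)] [Fact (1 ≤ q)]
    (hpq : 1/p + 1/q = 1) (w : Fin M → ℝ) {ρ : ℝ} (hρ : 0 ≤ ρ) :
    ∃ δ : Fin M → ℝ, ‖(WithLp.equiv p (Fin M → ℝ)).symm δ‖ ≤ ρ ∧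
      ρ * ‖(WithLp.equiv q (Fin M → ℝ)).symm w‖ ≤ ∑ i, w i * δ i := by
  rcases conj_cases p q hpq with ⟨rfl, rfl⟩ | ⟨rfl, rfl⟩ | ⟨hpt, hqt, hrc⟩
  · -- p = 1, q = ⊤ : point mass at the max coordinate
    rcases Nat.eq_zero_or_pos M with rfl | hM
    · refine ⟨0, by rw [norm_Lp_one]; simpa using hρ, ?_⟩
      rw [WithLp.equiv_symm_apply, PiLp.norm_toLp, show w = 0 from Subsingleton.elim _ _, norm_zero, mul_zero]
      simp
    · obtain ⟨i₀, _, hmax⟩ := Finset.exists_max_image Finset.univ (fun i => |w i|)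
        ⟨⟨0, hM⟩, Finset.mem_univ _⟩
      refine ⟨fun i => if i = i₀ then (if w i₀ < 0 then -ρ else ρ) else 0, ?_, ?_⟩
      · rw [norm_Lp_one]
        rw [Finset.sum_eq_single i₀ (fun i _ hi => by simp [hi]) (by simp), if_pos rfl]
        rcases lt_or_ge (w i₀) 0 with h | h
        · rw [if_pos h, abs_neg, abs_of_nonneg hρ]
        · rw [if_neg (not_lt.2 h), abs_of_nonneg hρ]
      · have h1 : ‖w‖ ≤ |w i₀| := by
          refine (pi_norm_le_iff_of_nonneg (abs_nonneg _)).2 fun i => ?_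
          simpa [Real.norm_eq_abs] using hmax i (Finset.mem_univ i)
        have h2 : w i₀ * (if w i₀ < 0 then -ρ else ρ) = ρ * |w i₀| := by
          rcases lt_or_ge (w i₀) 0 with h | h
          · rw [if_pos h, abs_of_neg h]; ring
          · rw [if_neg (not_lt.2 h), abs_of_nonneg h]; ring
        rw [WithLp.equiv_symm_apply, PiLp.norm_toLp]
        calc ρ * ‖w‖ ≤ ρ * |w i₀| := mul_le_mul_of_nonneg_left h1 hρ
          _ = ∑ i, w i * (if i = i₀ then (if w i₀ < 0 then -ρ else ρ) else 0) := by
              rw [Finset.sum_eq_single i₀ (fun i _ hi => by simp [hi]) (by simp)]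
              rw [if_pos rfl, h2]
  · -- p = ⊤, q = 1 : sign vector
    refine ⟨fun i => if w i < 0 then -ρ else ρ, ?_, ?_⟩
    · rw [WithLp.equiv_symm_apply, PiLp.norm_toLp]
      refine (pi_norm_le_iff_of_nonneg hρ).2 fun i => ?_
      rw [Real.norm_eq_abs]
      split <;> simp [abs_of_nonneg hρ]
    · rw [norm_Lp_one, Finset.mul_sum]
      refine le_of_eq (Finset.sum_congr rfl fun i _ => ?_)
      dsimp only
      rcases lt_or_ge (w i) 0 with h | h
      · rw [if_pos h, abs_of_neg h]; ring
      · rw [if_neg (not_lt.2 h), abs_of_nonneg h]; ring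
  · -- 1 < p, q < ⊤
    have hp0 : p ≠ 0 := (zero_lt_one.trans_le (Fact.out : 1 ≤ p)).ne'
    have hq0 : q ≠ 0 := (zero_lt_one.trans_le (Fact.out : 1 ≤ q)).ne'
    have hprpos : 0 < p.toReal := ENNReal.toReal_pos hp0 hpt
    have hqrpos : 0 < q.toReal := ENNReal.toReal_pos hq0 hqt
    have hconj : q.toReal.HolderConjugate p.toReal := hrc.symm
    obtain ⟨g, hg, hgsum⟩ := (NNReal.isGreatest_Lp (s := Finset.univ)
      (fun i => ‖w i‖₊) hconj).1
    simp only [Set.mem_setOf_eq] at hg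
    have hgle1 : ∑ i, (g i : ℝ) ^ p.toReal ≤ 1 := by
      have := NNReal.coe_le_coe.2 hg
      push_cast at this
      simpa using this
    refine ⟨fun i => ρ * (if w i < 0 then -(g i : ℝ) else (g i : ℝ)), ?_, ?_⟩
    · rw [PiLp.norm_eq_sum hprpos]
      simp only [WithLp.equiv_symm_apply, PiLp.toLp_apply, Real.norm_eq_abs]
      have habs : ∀ i : Fin M, |ρ * (if w i < 0 then -(g i:ℝ) else (g i:ℝ))| ^ p.toReal
          = ρ ^ p.toReal * (g i : ℝ) ^ p.toReal := by
        intro i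
        have h1 : |ρ * (if w i < 0 then -(g i:ℝ) else (g i:ℝ))| = ρ * (g i : ℝ) := by
          rw [abs_mul, abs_of_nonneg hρ]
          congr 1
          split <;> simp
        rw [h1, Real.mul_rpow hρ (g i).coe_nonneg]
      simp_rw [habs]
      rw [← Finset.mul_sum, Real.mul_rpow (by positivity) (by positivity)]
      have e1 : (ρ ^ p.toReal) ^ (1 / p.toReal) = ρ := by
        rw [← Real.rpow_mul hρ, mul_one_div_cancel hprpos.ne', Real.rpow_one]
      have e2 : (∑ i, (g i : ℝ) ^ p.toReal) ^ (1 / p.toReal) ≤ 1 :=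
        Real.rpow_le_one (by positivity) hgle1 (by positivity)
      rw [e1]
      exact mul_le_of_le_one_right hρ e2
    · have hval : ∑ i, w i * (ρ * (if w i < 0 then -(g i:ℝ) else (g i:ℝ)))
          = ρ * ∑ i, |w i| * (g i : ℝ) := by
        rw [Finset.mul_sum]
        refine Finset.sum_congr rfl fun i _ => ?_
        rcases lt_or_ge (w i) 0 with h | h
        · rw [if_pos h, abs_of_neg h]; ring
        · rw [if_neg (not_lt.2 h), abs_of_nonneg h]; ring
      rw [hval, PiLp.norm_eq_sum hqrpos]
      simp only [WithLp.equiv_symm_apply, PiLp.toLp_apply, Real.norm_eq_abs]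
      refine mul_le_mul_of_nonneg_left (le_of_eq ?_) hρ
      have hcast := congrArg (fun x : ℝ≥0 => (x : ℝ)) hgsum
      push_cast at hcast
      simp only [coe_nnnorm, Real.norm_eq_abs] at hcast
      exact hcast.symm

/-- `c_k := e_k - e_y`. -/
def cVec {K : ℕ} (y k : Fin K) : Fin K → ℝ :=
  fun i => (if i = k then 1 else 0) - (if i = y then 1 else 0)

theorem statement5 (M K r : ℕ) (W1 : Fin r → Fin M → ℝ) (W2 : Fin K → Fin r → ℝ)
    (b1 : Fin r → ℝ) (b2 : Fin K → ℝ) (y k : Fin K)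
    (ρ : ℝ) (hρ : 0 ≤ ρ) (p q : ℝ≥0∞) [Fact (1 ≤ p)] [Fact (1 ≤ q)]
    (hpq : 1 / p + 1 / q = 1) (x : Fin M → ℝ) :
    (⨆ δ ∈ {δ : Fin M → ℝ | ‖(WithLp.equiv p (Fin M → ℝ)).symm δ‖ ≤ ρ},
        ((∑ i, cVec y k i *
            ((∑ j, W2 i j * max ((∑ i', W1 j i' * (x + δ) i') + b1 j) 0) + b2 i) : ℝ) : EReal)) =
      ⨆ s ∈ Set.Icc (0 : Fin r → ℝ) 1, ⨅ t ∈ Set.Icc (0 : Fin r → ℝ) 1,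
        ((ρ * ‖(WithLp.equiv q (Fin M → ℝ)).symm
              (fun i => ∑ j, (max (∑ i', W2 i' j * cVec y k i') 0 * s j
                  - max (-(∑ i', W2 i' j * cVec y k i')) 0 * t j) * W1 j i)‖
          + (∑ j, (max (∑ i', W2 i' j * cVec y k i') 0 * s j
                  - max (-(∑ i', W2 i' j * cVec y k i')) 0 * t j)
              * ((∑ i', W1 j i' * x i') + b1 j))
          + ∑ i, cVec y k i * b2 i : ℝ) : EReal) := by
  classical
  let v : Fin r → ℝ := fun j => ∑ i', W2 i' j * cVec y k i'
  let a : Fin r → ℝ := fun j => (∑ i', W1 j i' * x i') + b1 j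
  let C : ℝ := ∑ i, cVec y k i * b2 i
  let wd : Fin r → (Fin M → ℝ) → ℝ := fun j δ => ∑ i', W1 j i' * δ i'
  let U : Set (Fin M → ℝ) := {δ : Fin M → ℝ | ‖(WithLp.equiv p (Fin M → ℝ)).symm δ‖ ≤ ρ}
  let G : (Fin M → ℝ) → ℝ := fun δ => (∑ j, v j * max (a j + wd j δ) 0) + C
  let u : (Fin r → ℝ) → (Fin r → ℝ) → Fin r → ℝ :=
    fun s t j => max (v j) 0 * s j - max (-(v j)) 0 * t j
  let wv : (Fin r → ℝ) → (Fin M → ℝ) := fun c i => ∑ j, c j * W1 j i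
  let F : (Fin r → ℝ) → (Fin r → ℝ) → ℝ := fun s t =>
    ρ * ‖(WithLp.equiv q (Fin M → ℝ)).symm (wv (u s t))‖ + (∑ j, u s t j * a j) + C
  -- body identifications
  have hswap : ∀ R : Fin r → ℝ,
      (∑ i, cVec y k i * ((∑ j, W2 i j * R j) + b2 i)) = (∑ j, v j * R j) + C := by
    intro R
    simp only [mul_add, Finset.sum_add_distrib, Finset.mul_sum]
    congr 1
    rw [Finset.sum_comm]
    refine Finset.sum_congr rfl fun j _ => ?_
    simp only [v, Finset.sum_mul]
    exact Finset.sum_congr rfl fun i _ => by ring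
  have hbodyL : ∀ δ : Fin M → ℝ,
      (∑ i, cVec y k i *
        ((∑ j, W2 i j * max ((∑ i', W1 j i' * (x + δ) i') + b1 j) 0) + b2 i)) = G δ := by
    intro δ
    have h1 : ∀ j, (∑ i', W1 j i' * (x + δ) i') + b1 j = a j + wd j δ := by
      intro j
      have h2 : ∀ i', W1 j i' * (x + δ) i' = W1 j i' * x i' + W1 j i' * δ i' := fun i' => by
        show W1 j i' * (x i' + δ i') = _
        ring
      rw [Finset.sum_congr rfl fun i' _ => h2 i', Finset.sum_add_distrib]
      simp only [a, wd]
      ring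
    simp only [h1]
    exact hswap _
  have hR : ∀ s t : Fin r → ℝ,
      (ρ * ‖(WithLp.equiv q (Fin M → ℝ)).symm
              (fun i => ∑ j, (max (∑ i', W2 i' j * cVec y k i') 0 * s j
                  - max (-(∑ i', W2 i' j * cVec y k i')) 0 * t j) * W1 j i)‖
          + (∑ j, (max (∑ i', W2 i' j * cVec y k i') 0 * s j
                  - max (-(∑ i', W2 i' j * cVec y k i')) 0 * t j)
              * ((∑ i', W1 j i' * x i') + b1 j))
          + ∑ i, cVec y k i * b2 i) = F s t := fun s t => rfl
  rw [show (⨆ δ ∈ {δ : Fin M → ℝ | ‖(WithLp.equiv p (Fin M → ℝ)).symm δ‖ ≤ ρ},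
        ((∑ i, cVec y k i *
            ((∑ j, W2 i j * max ((∑ i', W1 j i' * (x + δ) i') + b1 j) 0) + b2 i) : ℝ) : EReal))
      = ⨆ δ ∈ U, ((G δ : ℝ) : EReal) from
    iSup_congr fun δ => iSup_congr fun _ => by rw [hbodyL δ]]
  rw [show (⨆ s ∈ Set.Icc (0 : Fin r → ℝ) 1, ⨅ t ∈ Set.Icc (0 : Fin r → ℝ) 1,
        ((ρ * ‖(WithLp.equiv q (Fin M → ℝ)).symm
              (fun i => ∑ j, (max (∑ i', W2 i' j * cVec y k i') 0 * s j
                  - max (-(∑ i', W2 i' j * cVec y k i')) 0 * t j) * W1 j i)‖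
          + (∑ j, (max (∑ i', W2 i' j * cVec y k i') 0 * s j
                  - max (-(∑ i', W2 i' j * cVec y k i')) 0 * t j)
              * ((∑ i', W1 j i' * x i') + b1 j))
          + ∑ i, cVec y k i * b2 i : ℝ) : EReal))
      = ⨆ s ∈ Set.Icc (0 : Fin r → ℝ) 1, ⨅ t ∈ Set.Icc (0 : Fin r → ℝ) 1,
          ((F s t : ℝ) : EReal) from
    iSup_congr fun s => iSup_congr fun _ => iInf_congr fun t => iInf_congr fun _ => by
      rw [hR s t]]
  have hkey2 : ∀ (c : Fin r → ℝ) (δ : Fin M → ℝ),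
      ∑ i, wv c i * δ i = ∑ j, c j * wd j δ := by
    intro c δ
    simp only [wv, wd, Finset.sum_mul, Finset.mul_sum]
    rw [Finset.sum_comm]
    exact Finset.sum_congr rfl fun j _ => Finset.sum_congr rfl fun i _ => by ring
  have hαβ : ∀ j, max (v j) 0 - max (-(v j)) 0 = v j := by
    intro j
    rcases le_total 0 (v j) with h | h
    · rw [max_eq_left h, max_eq_right (by linarith)]; ring
    · rw [max_eq_right h, max_eq_left (by linarith)]; ring
  have hwda : ∀ (j : Fin r) (l m : ℝ) (δ1 δ2 : Fin M → ℝ),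
      wd j (l • δ1 + m • δ2) = l * wd j δ1 + m * wd j δ2 := by
    intro j l m δ1 δ2
    have h : ∀ i, W1 j i * (l • δ1 + m • δ2) i
        = l * (W1 j i * δ1 i) + m * (W1 j i * δ2 i) := by
      intro i
      simp only [Pi.add_apply, Pi.smul_apply, smul_eq_mul]
      ring
    simp only [wd]
    rw [Finset.sum_congr rfl fun i _ => h i, Finset.sum_add_distrib,
      ← Finset.mul_sum, ← Finset.mul_sum]
  refine le_antisymm ?_ ?_
  · -- LHS ≤ RHS
    refine iSup₂_le fun δ hδ => ?_
    set s : Fin r → ℝ := fun j => if 0 ≤ a j + wd j δ then 1 else 0 with hs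
    have hsmem : s ∈ Set.Icc (0 : Fin r → ℝ) 1 := by
      rw [Set.mem_Icc]
      refine ⟨fun j => ?_, fun j => ?_⟩ <;>
        simp only [hs, Pi.zero_apply, Pi.one_apply] <;> split <;> norm_num
    refine le_trans ?_ (le_iSup₂ (f := fun s _ => ⨅ t ∈ Set.Icc (0 : Fin r → ℝ) 1,
      ((F s t : ℝ) : EReal)) s hsmem)
    refine le_iInf₂ fun t ht => ?_
    rw [EReal.coe_le_coe_iff]
    -- real inequality G δ ≤ F s t
    have hterm : ∀ j, v j * max (a j + wd j δ) 0 ≤ u s t j * (a j + wd j δ) := by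
      intro j
      have ht0 : (0:ℝ) ≤ t j := ht.1 j
      have ht1 : t j ≤ 1 := ht.2 j
      have h := hαβ j
      rcases le_or_gt 0 (a j + wd j δ) with hz0 | hz0
      · have hsj : s j = 1 := if_pos hz0
        rw [max_eq_left hz0]
        show v j * (a j + wd j δ) ≤ (max (v j) 0 * s j - max (-(v j)) 0 * t j) * (a j + wd j δ)
        rw [hsj, mul_one]
        have hB : (0:ℝ) ≤ max (-(v j)) 0 := le_max_right _ _
        have hkey : 0 ≤ max (-(v j)) 0 * (1 - t j) * (a j + wd j δ) :=
          mul_nonneg (mul_nonneg hB (by linarith)) hz0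
        have hA' : max (v j) 0 = v j + max (-(v j)) 0 := by linarith [hαβ j]
        have hexp : (max (v j) 0 - max (-(v j)) 0 * t j) * (a j + wd j δ)
            = v j * (a j + wd j δ) + max (-(v j)) 0 * (1 - t j) * (a j + wd j δ) := by
          rw [hA']; ring
        linarith
      · have hsj : s j = 0 := if_neg (not_le.2 hz0)
        rw [max_eq_right hz0.le, mul_zero]
        show (0:ℝ) ≤ (max (v j) 0 * s j - max (-(v j)) 0 * t j) * (a j + wd j δ)
        rw [hsj, mul_zero, zero_sub]
        have hB : (0:ℝ) ≤ max (-(v j)) 0 := le_max_right _ _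
        have hkey : 0 ≤ max (-(v j)) 0 * t j * -(a j + wd j δ) :=
          mul_nonneg (mul_nonneg hB ht0) (by linarith)
        nlinarith [hkey]
    have hhold : ∑ i, wv (u s t) i * δ i ≤
        ρ * ‖(WithLp.equiv q (Fin M → ℝ)).symm (wv (u s t))‖ := by
      calc ∑ i, wv (u s t) i * δ i
          ≤ ‖(WithLp.equiv q (Fin M → ℝ)).symm (wv (u s t))‖ *
              ‖(WithLp.equiv p (Fin M → ℝ)).symm δ‖ := holder_sum p q hpq _ _
        _ ≤ ‖(WithLp.equiv q (Fin M → ℝ)).symm (wv (u s t))‖ * ρ :=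
            mul_le_mul_of_nonneg_left hδ (norm_nonneg _)
        _ = ρ * ‖(WithLp.equiv q (Fin M → ℝ)).symm (wv (u s t))‖ := mul_comm _ _
    have hsplit : ∑ j, u s t j * (a j + wd j δ)
        = (∑ i, wv (u s t) i * δ i) + ∑ j, u s t j * a j := by
      rw [hkey2, ← Finset.sum_add_distrib]
      exact Finset.sum_congr rfl fun j _ => by ring
    calc G δ = (∑ j, v j * max (a j + wd j δ) 0) + C := rfl
      _ ≤ (∑ j, u s t j * (a j + wd j δ)) + C :=
          add_le_add_left (Finset.sum_le_sum fun j _ => hterm j) C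
      _ = (∑ i, wv (u s t) i * δ i) + ((∑ j, u s t j * a j) + C) := by rw [hsplit]; ring
      _ ≤ ρ * ‖(WithLp.equiv q (Fin M → ℝ)).symm (wv (u s t))‖
            + ((∑ j, u s t j * a j) + C) := add_le_add_left hhold _
      _ = F s t := by show _ = ρ * _ + (∑ j, u s t j * a j) + C; ring
  · -- RHS ≤ LHS
    refine iSup₂_le fun s hs => ?_
    have hUcomp : IsCompact U := by
      have h1 : IsCompact (Metric.closedBall (0 : WithLp p (Fin M → ℝ)) ρ) :=
        isCompact_closedBall _ _
      have h2 := h1.image (PiLp.continuous_ofLp p (fun _ : Fin M => ℝ))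
      convert h2 using 1
      rw [show (WithLp.ofLp : WithLp p (Fin M → ℝ) → _) = WithLp.equiv p (Fin M → ℝ) from rfl,
        Equiv.image_eq_preimage_symm]
      ext δ
      simp only [U, Set.mem_setOf_eq, Set.mem_preimage, Metric.mem_closedBall,
        dist_zero_right]
    have hU0 : (0 : Fin M → ℝ) ∈ U := by
      simp only [U, Set.mem_setOf_eq]
      rw [show (WithLp.equiv p (Fin M → ℝ)).symm 0 = 0 from rfl, norm_zero]
      exact hρ
    have hGcont : Continuous G := by
      have hwdc : ∀ j, Continuous (wd j) :=
        fun j => continuous_finset_sum _ fun i _ => continuous_const.mul (continuous_apply i)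
      exact (continuous_finset_sum _ fun j _ =>
        continuous_const.mul ((continuous_const.add (hwdc j)).max continuous_const)).add
        continuous_const
    obtain ⟨δ₀, hδ₀U, hδ₀m⟩ := hUcomp.exists_isMaxOn ⟨0, hU0⟩ hGcont.continuousOn
    have hδ₀max : ∀ δ' ∈ U, G δ' ≤ G δ₀ := fun δ' hδ' => isMaxOn_iff.1 hδ₀m δ' hδ' 
    have hUconv : ∀ a' ∈ U, ∀ b' ∈ U, ∀ l m : ℝ, 0 ≤ l → 0 ≤ m → l + m = 1 →
        l • a' + m • b' ∈ U := by
      intro a' ha' b' hb' l m hl hm hlm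
      simp only [U, Set.mem_setOf_eq] at *
      have heq : (WithLp.equiv p (Fin M → ℝ)).symm (l • a' + m • b')
          = l • (WithLp.equiv p (Fin M → ℝ)).symm a'
            + m • (WithLp.equiv p (Fin M → ℝ)).symm b' := rfl
      rw [heq]
      calc ‖l • (WithLp.equiv p (Fin M → ℝ)).symm a'
            + m • (WithLp.equiv p (Fin M → ℝ)).symm b'‖
          ≤ ‖l • (WithLp.equiv p (Fin M → ℝ)).symm a'‖
            + ‖m • (WithLp.equiv p (Fin M → ℝ)).symm b'‖ := norm_add_le _ _
        _ = |l| * ‖(WithLp.equiv p (Fin M → ℝ)).symm a'‖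
            + |m| * ‖(WithLp.equiv p (Fin M → ℝ)).symm b'‖ := by
            rw [norm_smul, norm_smul, Real.norm_eq_abs, Real.norm_eq_abs]
        _ ≤ l * ρ + m * ρ := by
            rw [abs_of_nonneg hl, abs_of_nonneg hm]
            gcongr
        _ = ρ := by rw [← add_mul, hlm, one_mul]
    set f : (Fin M → ℝ) → ℝ := fun δ => (∑ j, max (v j) 0 * s j * (a j + wd j δ)) + C with hf
    set g : Fin r → (Fin M → ℝ) → ℝ := fun j δ => -(max (-(v j)) 0 * (a j + wd j δ)) with hgdef
    have hgaff : ∀ j, ∀ a' ∈ U, ∀ b' ∈ U, ∀ l m : ℝ, 0 ≤ l → 0 ≤ m → l + m = 1 →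
        g j (l • a' + m • b') = l * g j a' + m * g j b' := by
      intro j a' _ b' _ l m hl hm hlm
      simp only [hgdef]
      rw [hwda j l m a' b']
      linear_combination (max (-(v j)) 0 * a j) * hlm
    have hfconc : ∀ a' ∈ U, ∀ b' ∈ U, ∀ l m : ℝ, 0 ≤ l → 0 ≤ m → l + m = 1 →
        l * f a' + m * f b' ≤ f (l • a' + m • b') := by
      intro a' _ b' _ l m hl hm hlm
      refine le_of_eq ?_
      simp only [hf]
      rw [show (∑ j, max (v j) 0 * s j * (a j + wd j (l • a' + m • b')))
          = l * (∑ j, max (v j) 0 * s j * (a j + wd j a'))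
            + m * (∑ j, max (v j) 0 * s j * (a j + wd j b')) from by
        rw [Finset.mul_sum, Finset.mul_sum, ← Finset.sum_add_distrib]
        refine Finset.sum_congr rfl fun j _ => ?_
        rw [hwda j l m a' b']
        linear_combination (-(max (v j) 0 * s j * a j)) * hlm]
      linear_combination C * hlm
    have hVb : ∀ δ ∈ U, f δ + ∑ j, min 0 (g j δ) ≤ G δ₀ := by
      intro δ hδ
      refine le_trans ?_ (hδ₀max δ hδ)
      show (∑ j, max (v j) 0 * s j * (a j + wd j δ)) + C
          + ∑ j, min 0 (-(max (-(v j)) 0 * (a j + wd j δ)))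
        ≤ (∑ j, v j * max (a j + wd j δ) 0) + C
      rw [add_right_comm, ← Finset.sum_add_distrib]
      refine add_le_add_left (Finset.sum_le_sum fun j _ => ?_) C
      have hs0 : (0:ℝ) ≤ s j := by simpa using hs.1 j
      have hs1 : s j ≤ 1 := by simpa using hs.2 j
      have hA : (0:ℝ) ≤ max (v j) 0 := le_max_right _ _
      have hB : (0:ℝ) ≤ max (-(v j)) 0 := le_max_right _ _
      rcases le_or_gt 0 (a j + wd j δ) with hz0 | hz0
      · rw [min_eq_right (neg_nonpos.2 (mul_nonneg hB hz0)), max_eq_left hz0]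
        have hkey : 0 ≤ max (v j) 0 * (1 - s j) * (a j + wd j δ) :=
          mul_nonneg (mul_nonneg hA (by linarith)) hz0
        have hexp : v j * (a j + wd j δ)
            = (max (v j) 0 - max (-(v j)) 0) * (a j + wd j δ) := by rw [hαβ j]
        nlinarith [hkey]
      · rw [min_eq_left (neg_nonneg.2 (mul_nonpos_of_nonneg_of_nonpos hB hz0.le)),
          max_eq_right hz0.le, mul_zero]
        have hkey : max (v j) 0 * s j * (a j + wd j δ) ≤ 0 :=
          mul_nonpos_of_nonneg_of_nonpos (mul_nonneg hA hs0) hz0.le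
        linarith
    obtain ⟨t, htIcc, htV⟩ := multi_minimax U g hUconv hgaff Finset.univ f (G δ₀) hfconc hVb
    have htmem : t ∈ Set.Icc (0 : Fin r → ℝ) 1 :=
      Set.mem_Icc.2 ⟨fun j => (htIcc j).1, fun j => (htIcc j).2⟩
    obtain ⟨δh, hδhU, hδhval⟩ := holder_attain p q hpq (wv (u s t)) hρ
    have hδhU' : δh ∈ U := hδhU
    have hcomb : f δh + ∑ j, t j * g j δh = (∑ j, u s t j * (a j + wd j δh)) + C := by
      simp only [hf, hgdef]
      rw [add_right_comm, ← Finset.sum_add_distrib]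
      congr 1
      refine Finset.sum_congr rfl fun j _ => ?_
      show max (v j) 0 * s j * (a j + wd j δh) + t j * -(max (-(v j)) 0 * (a j + wd j δh))
        = (max (v j) 0 * s j - max (-(v j)) 0 * t j) * (a j + wd j δh)
      ring
    have hFle : F s t ≤ G δ₀ := by
      have h2 : ∑ i, wv (u s t) i * δh i = ∑ j, u s t j * wd j δh := hkey2 _ _
      have h3 := htV δh hδhU'
      rw [hcomb] at h3
      have h5 : (∑ j, u s t j * (a j + wd j δh))
          = (∑ j, u s t j * wd j δh) + ∑ j, u s t j * a j := by
        rw [← Finset.sum_add_distrib]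
        exact Finset.sum_congr rfl fun j _ => by ring
      have h6 : ρ * ‖(WithLp.equiv q (Fin M → ℝ)).symm (wv (u s t))‖
          ≤ ∑ j, u s t j * wd j δh := by rw [← h2]; exact hδhval
      show ρ * ‖(WithLp.equiv q (Fin M → ℝ)).symm (wv (u s t))‖
          + (∑ j, u s t j * a j) + C ≤ G δ₀
      rw [h5] at h3
      linarith
    calc (⨅ t' ∈ Set.Icc (0 : Fin r → ℝ) 1, ((F s t' : ℝ) : EReal))
        ≤ ((F s t : ℝ) : EReal) := iInf₂_le t htmem
      _ ≤ ((G δ₀ : ℝ) : EReal) := EReal.coe_le_coe_iff.2 hFle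
      _ ≤ ⨆ δ ∈ U, ((G δ : ℝ) : EReal) :=
          le_iSup₂ (f := fun δ (_ : δ ∈ U) => ((G δ : ℝ) : EReal)) δ₀ hδ₀U
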